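/- Let f₀ be a probability density on a set S₀ ⊆ ℝ with distribution function F₀ (continuous), G a CDF on ℝ symmetric about 0 (G(-x) = 1 - G(x)) and continuous except possibly at 0, and w₁ an odd function on (-1/2, 1/2). Then x ↦ 2 f₀(x) G(w₁(F₀(x) - 1/2)) is a probability density on S₀. -/

import Mathlib

open MeasureTheory Set Filter Topology ENNReal NNReal

/-- Proposition 3: if `f₀` is a probability density supported on `S₀ ⊆ ℝ` with
(continuous) distribution function `F₀`, `G` is a CDF symmetric about 0 and
continuous except possibly at 0, and `w₁` is odd on `(-1/2, 1/2)`, then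
`x ↦ 2 f₀(x) G(w₁(F₀(x) - 1/2))` is a probability density on `S₀`. -/
theorem prop3_integral_transform
    (S₀ : Set ℝ) (hS₀ : MeasurableSet S₀)
    (f₀ : ℝ → ℝ) (F₀ : ℝ → ℝ) (G : ℝ → ℝ) (w₁ : ℝ → ℝ)
    (hf₀_meas : Measurable f₀) (hf₀_nonneg : ∀ x, 0 ≤ f₀ x)
    (hf₀_supp : ∀ x ∉ S₀, f₀ x = 0)
    (hf₀_int : ∫ x in S₀, f₀ x = 1)
    (hF₀ : ∀ x, F₀ x = ∫ t in Iic x, f₀ t)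
    (hG_mono : Monotone G) (hG_range : ∀ x, G x ∈ Icc (0:ℝ) 1)
    (hG_symm : ∀ x, G (-x) = 1 - G x)
    (hG_cont : ∀ x ≠ (0:ℝ), ContinuousAt G x)
    (hw₁_meas : Measurable w₁)
    (hw₁_odd : ∀ x ∈ Ioo (-(1:ℝ)/2) (1/2), w₁ (-x) = -w₁ x) :
    ∫ x in S₀, 2 * f₀ x * G (w₁ (F₀ x - 1/2)) = 1 := by
  classical
  -- integrability of f₀
  have hint_S : IntegrableOn f₀ S₀ := by
    by_contra h
    rw [MeasureTheory.integral_undef h] at hf₀_int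
    norm_num at hf₀_int
  have hf_eq : ∀ x, S₀.indicator f₀ x = f₀ x := by
    intro x
    by_cases hx : x ∈ S₀
    · simp [indicator, hx]
    · simp [indicator, hx, hf₀_supp x hx]
  have hint : Integrable f₀ (volume : Measure ℝ) := by
    have := hint_S.integrable_indicator hS₀
    exact this.congr (Eventually.of_forall hf_eq)
  have hItot : ∫ x, f₀ x = 1 := by
    rw [← hf₀_int, ← integral_indicator hS₀]
    exact integral_congr_ae (Eventually.of_forall fun x => (hf_eq x).symm)
  -- basic properties of F₀
  have hF₀_mono : Monotone F₀ := by
    intro a b hab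
    rw [hF₀ a, hF₀ b]
    exact setIntegral_mono_set hint.integrableOn (Eventually.of_forall hf₀_nonneg)
      (HasSubset.Subset.eventuallyLE (Iic_subset_Iic.2 hab))
  have hF₀_meas : Measurable F₀ := hF₀_mono.measurable
  have hF₀_nonneg : ∀ x, 0 ≤ F₀ x := by
    intro x
    rw [hF₀ x]
    exact setIntegral_nonneg measurableSet_Iic fun t _ => hf₀_nonneg t
  have hF₀_le_one : ∀ x, F₀ x ≤ 1 := by
    intro x
    rw [hF₀ x, ← hItot]
    exact setIntegral_le_integral hint (Eventually.of_forall hf₀_nonneg)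
  -- a dominated convergence principle for the primitive
  have hdom : ∀ (l : Filter ℝ) [l.IsCountablyGenerated] (g : ℝ → ℝ),
      (∀ᵐ t : ℝ, Tendsto (fun y => (Iic y).indicator f₀ t) l (𝓝 (g t))) →
      Tendsto F₀ l (𝓝 (∫ t, g t)) := by
    intro l _ g hg
    have : Tendsto (fun y => ∫ t, (Iic y).indicator f₀ t) l (𝓝 (∫ t, g t)) := by
      apply tendsto_integral_filter_of_dominated_convergence (fun t => |f₀ t|)
      · exact Eventually.of_forall fun y =>
          (hf₀_meas.indicator measurableSet_Iic).aestronglyMeasurable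
      · refine Eventually.of_forall fun y => Eventually.of_forall fun t => ?_
        by_cases h : t ∈ Iic y <;> simp [indicator, h, abs_nonneg, le_abs_self]
      · exact hint.abs
      · exact hg
    exact this.congr fun y => by rw [integral_indicator measurableSet_Iic, ← hF₀ y]
  have hF₀_cont : Continuous F₀ := by
    rw [continuous_iff_continuousAt]
    intro x
    have hae : ∀ᵐ t : ℝ, Tendsto (fun y => (Iic y).indicator f₀ t) (𝓝 x)
        (𝓝 ((Iic x).indicator f₀ t)) := by
      have hne : ∀ᵐ t : ℝ, t ≠ x := by
        rw [ae_iff]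
        simp only [not_not]
        have : {t : ℝ | t = x} = {x} := by ext t; simp
        rw [this]
        exact Real.volume_singleton
      filter_upwards [hne] with t ht
      rcases lt_or_gt_of_ne ht with h | h
      · have hev : ∀ᶠ y in 𝓝 x, (Iic y).indicator f₀ t = (Iic x).indicator f₀ t := by
          filter_upwards [eventually_gt_nhds h] with y hy
          simp [indicator, hy.le, h.le]
        exact (tendsto_const_nhds.congr' (hev.mono fun y hy => hy.symm))
      · have hev : ∀ᶠ y in 𝓝 x, (Iic y).indicator f₀ t = (Iic x).indicator f₀ t := by
          filter_upwards [eventually_lt_nhds h] with y hy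
          simp [indicator, not_le.2 hy, not_le.2 h]
        exact (tendsto_const_nhds.congr' (hev.mono fun y hy => hy.symm))
    have := hdom (𝓝 x) ((Iic x).indicator f₀) hae
    rwa [integral_indicator measurableSet_Iic, ← hF₀ x] at this
  have hF₀_top : Tendsto F₀ atTop (𝓝 1) := by
    have hae : ∀ᵐ t : ℝ, Tendsto (fun y => (Iic y).indicator f₀ t) atTop (𝓝 (f₀ t)) := by
      refine Eventually.of_forall fun t => ?_
      have hev : ∀ᶠ y in atTop, (Iic y).indicator f₀ t = f₀ t := by
        filter_upwards [eventually_ge_atTop t] with y hy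
        simp [indicator, hy]
      exact tendsto_const_nhds.congr' (hev.mono fun y hy => hy.symm)
    have := hdom atTop f₀ hae
    rwa [hItot] at this
  have hF₀_bot : Tendsto F₀ atBot (𝓝 0) := by
    have hae : ∀ᵐ t : ℝ, Tendsto (fun y => (Iic y).indicator f₀ t) atBot (𝓝 0) := by
      refine Eventually.of_forall fun t => ?_
      have hev : ∀ᶠ y in atBot, (Iic y).indicator f₀ t = 0 := by
        filter_upwards [eventually_lt_atBot t] with y hy
        simp [indicator, not_le.2 hy]
      exact tendsto_const_nhds.congr' (hev.mono fun y hy => hy.symm)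
    have := hdom atBot (fun _ => 0) hae
    simpa using this
  -- the measure with density f₀
  set ν : Measure ℝ := volume.withDensity (fun x => ENNReal.ofReal (f₀ x)) with hνdef
  have hν_Iic : ∀ a, ν (Iic a) = ENNReal.ofReal (F₀ a) := by
    intro a
    rw [hνdef, withDensity_apply _ measurableSet_Iic, hF₀ a,
      ofReal_integral_eq_lintegral_ofReal hint.integrableOn
        (Eventually.of_forall hf₀_nonneg)]
  have hν_univ : ν univ = 1 := by
    rw [hνdef, withDensity_apply _ MeasurableSet.univ, Measure.restrict_univ,
      ← ofReal_integral_eq_lintegral_ofReal hint (Eventually.of_forall hf₀_nonneg),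
      hItot, ENNReal.ofReal_one]
  have hν_prob : IsProbabilityMeasure ν := ⟨hν_univ⟩
  -- probability integral transform: the law of F₀ under ν is uniform on (0, 1]
  have hmap : ν.map F₀ = volume.restrict (Ioc 0 1) := by
    have hfin : IsProbabilityMeasure (ν.map F₀) :=
      Measure.isProbabilityMeasure_map hF₀_meas.aemeasurable
    refine Measure.ext_of_Iic _ _ fun c => ?_
    rw [Measure.map_apply hF₀_meas measurableSet_Iic,
      Measure.restrict_apply measurableSet_Iic]
    rcases lt_or_ge c 0 with hc | hc
    · have h1 : F₀ ⁻¹' Iic c = ∅ := by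
        ext x
        simp only [mem_preimage, mem_Iic, mem_empty_iff_false, iff_false, not_le]
        exact hc.trans_le (hF₀_nonneg x)
      have h2 : Iic c ∩ Ioc 0 1 = ∅ := by
        ext x
        simp only [mem_inter_iff, mem_Iic, mem_Ioc, mem_empty_iff_false, iff_false]
        rintro ⟨hx1, hx2, _⟩
        exact absurd (hx1.trans hc.le) (not_le.2 hx2)
      rw [h1, h2]
      simp
    rcases lt_or_ge c 1 with hc1 | hc1
    · -- c ∈ [0, 1)
      have h2 : Iic c ∩ Ioc 0 1 = Ioc 0 c := by
        ext x
        simp only [mem_inter_iff, mem_Iic, mem_Ioc]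
        constructor
        · rintro ⟨h1, h2, _⟩; exact ⟨h2, h1⟩
        · rintro ⟨h1, h2⟩; exact ⟨h2, h1, h2.trans hc1.le⟩
      rw [h2, Real.volume_Ioc, sub_zero]
      by_cases hA : (F₀ ⁻¹' Iic c).Nonempty
      · -- the preimage is Iic (sSup ...)
        have hBdd : BddAbove (F₀ ⁻¹' Iic c) := by
          obtain ⟨x₀, hx₀⟩ := (hF₀_top.eventually (eventually_gt_nhds hc1)).exists
          refine ⟨x₀, fun x hx => ?_⟩
          by_contra hgt
          push_neg at hgt
          exact absurd (hF₀_mono hgt.le) (not_le.2 (lt_of_le_of_lt hx hx₀))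
        have hclosed : IsClosed (F₀ ⁻¹' Iic c) := isClosed_Iic.preimage hF₀_cont
        set a := sSup (F₀ ⁻¹' Iic c) with ha
        have haA : a ∈ F₀ ⁻¹' Iic c := hclosed.csSup_mem hA hBdd
        have hIic : F₀ ⁻¹' Iic c = Iic a := by
          ext x
          simp only [mem_preimage, mem_Iic]
          constructor
          · intro hx; exact le_csSup hBdd hx
          · intro hx; exact le_trans (hF₀_mono hx) haA
        have hFa : F₀ a = c := by
          refine le_antisymm haA ?_
          by_contra hlt
          push_neg at hlt
          have hev : ∀ᶠ y in 𝓝 a, F₀ y < c := (hF₀_cont.continuousAt).eventually_lt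
            continuousAt_const hlt
          have hev2 : ∀ᶠ y in 𝓝[>] a, F₀ y < c := hev.filter_mono nhdsWithin_le_nhds
          have hev3 : ∀ᶠ y in 𝓝[>] a, y ∈ Ioi a := eventually_mem_nhdsWithin
          obtain ⟨y, hyc, hya⟩ := (hev2.and hev3).exists
          have hyle : y ≤ a := le_csSup hBdd (le_of_lt hyc)
          exact absurd hyle (not_le.2 hya)
        rw [hIic, hν_Iic, hFa]
      · -- preimage empty: then c = 0
        rw [not_nonempty_iff_eq_empty] at hA
        have hall : ∀ x, c < F₀ x := by
          intro x
          by_contra hle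
          push_neg at hle
          have hmem : x ∈ F₀ ⁻¹' Iic c := hle
          rw [hA] at hmem
          exact Set.notMem_empty x hmem
        have hc0 : c ≤ 0 := ge_of_tendsto hF₀_bot (Eventually.of_forall fun x => (hall x).le)
        have hcz : c = 0 := le_antisymm hc0 hc
        rw [hA, hcz]
        simp
    · -- c ≥ 1
      have h1 : F₀ ⁻¹' Iic c = univ := by
        ext x
        simp only [mem_preimage, mem_Iic, mem_univ, iff_true]
        exact (hF₀_le_one x).trans hc1
      have h2 : Iic c ∩ Ioc 0 1 = Ioc 0 1 := by
        refine inter_eq_self_of_subset_right fun x hx => ?_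
        exact hx.2.trans hc1
      rw [h1, h2, hν_univ, Real.volume_Ioc]
      norm_num
  -- transfer the integral to the uniform distribution
  set g : ℝ → ℝ := fun u => G (w₁ (u - 1/2)) with hgdef
  have hg_meas : Measurable g :=
    hG_mono.measurable.comp (hw₁_meas.comp (measurable_id.sub_const _))
  have step1 : ∫ x in S₀, 2 * f₀ x * G (w₁ (F₀ x - 1/2)) = ∫ x, 2 * f₀ x * g (F₀ x) :=
    setIntegral_eq_integral_of_forall_compl_eq_zero fun x hx => by
      rw [hf₀_supp x hx]; ring
  have step2 : ∫ x, (2 * g (F₀ x)) ∂ν = ∫ x, 2 * f₀ x * g (F₀ x) := by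
    have h1 : ∫ x, (2 * g (F₀ x)) ∂ν =
        ∫ x, (f₀ x).toNNReal • (2 * g (F₀ x)) :=
      integral_withDensity_eq_integral_smul hf₀_meas.real_toNNReal _
    rw [h1]
    refine integral_congr_ae (Eventually.of_forall fun x => ?_)
    show (f₀ x).toNNReal • (2 * g (F₀ x)) = 2 * f₀ x * g (F₀ x)
    rw [NNReal.smul_def, smul_eq_mul, Real.coe_toNNReal _ (hf₀_nonneg x)]
    ring
  have step3 : ∫ x, (2 * g (F₀ x)) ∂ν = ∫ u in Ioc (0:ℝ) 1, 2 * g u := by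
    rw [← hmap, integral_map (f := fun u => 2 * g u) hF₀_meas.aemeasurable
      ((measurable_const.mul hg_meas : Measurable fun u => 2 * g u).aestronglyMeasurable)]
  -- the uniform integral equals 1/2 by symmetry
  have hg_int : IntegrableOn g (Ioc (0:ℝ) 1) := by
    have hc : IntegrableOn (fun _ => (1:ℝ)) (Ioc (0:ℝ) 1) volume :=
      integrableOn_const (by rw [Real.volume_Ioc]; norm_num)
    refine Integrable.mono' hc hg_meas.aestronglyMeasurable ?_
    · refine Eventually.of_forall fun u => ?_
      rw [Real.norm_eq_abs, abs_le]
      exact ⟨by linarith [(hG_range (w₁ (u - 1/2))).1], (hG_range (w₁ (u - 1/2))).2⟩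
  have hrefl : ∫ u in Ioc (0:ℝ) 1, g (1 - u) = ∫ u in Ioc (0:ℝ) 1, g u := by
    rw [← intervalIntegral.integral_of_le (zero_le_one),
      ← intervalIntegral.integral_of_le (zero_le_one)]
    have h := intervalIntegral.integral_comp_sub_left (a := (0:ℝ)) (b := 1) g 1
    simpa using h
  have hsym : ∫ u in Ioc (0:ℝ) 1, g (1 - u) = ∫ u in Ioc (0:ℝ) 1, (1 - g u) := by
    refine setIntegral_congr_ae measurableSet_Ioc ?_
    have hne : ∀ᵐ u : ℝ, u ≠ 1 := by
      rw [ae_iff]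
      simp only [not_not]
      have h1 : {u : ℝ | u = 1} = {1} := by ext u; simp
      rw [h1]
      exact Real.volume_singleton
    filter_upwards [hne] with u hu humem
    have hmem : u - 1/2 ∈ Ioo (-(1:ℝ)/2) (1/2) := by
      constructor
      · linarith [humem.1]
      · have : u < 1 := lt_of_le_of_ne humem.2 hu
        linarith
    show G (w₁ (1 - u - 1/2)) = 1 - G (w₁ (u - 1/2))
    rw [show (1 : ℝ) - u - 1/2 = -(u - 1/2) by ring, hw₁_odd _ hmem, hG_symm]
  have hone : ∫ t in Ioc (0:ℝ) 1, (1:ℝ) = 1 := by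
    rw [setIntegral_const, Real.volume_real_Ioc]
    norm_num
  have hI : ∫ u in Ioc (0:ℝ) 1, g u = 1/2 := by
    have h1 : ∫ u in Ioc (0:ℝ) 1, (1 - g u) =
        (∫ t in Ioc (0:ℝ) 1, (1:ℝ)) - ∫ u in Ioc (0:ℝ) 1, g u := by
      exact integral_sub (integrableOn_const (by rw [Real.volume_Ioc]; norm_num))
        hg_int
    have h2 := hrefl.symm.trans hsym
    rw [h1, hone] at h2
    linarith
  rw [step1, ← step2, step3, MeasureTheory.integral_const_mul, hI]
  norm_num
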